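/- For every set E ⊆ ℝ^n and every 0 < θ < 1, the regularized Assouad spectrum is the running supremum of the (unregularized) Assouad spectrum: dim_{A,reg}^θ(E) = sup_{0 < θ' < θ} dim_A^{θ'}(E). -/

import Mathlib

open Set Metric
open scoped ENNReal

noncomputable section

/-- Covering number: the smallest number of sets of diameter at most `r` needed to
cover `F` (`∞` if no finite such cover exists). -/
def coverN {X : Type*} [PseudoMetricSpace X] (F : Set X) (r : ℝ) : ℝ≥0∞ :=
  sInf {m : ℝ≥0∞ | ∃ 𝒰 : Finset (Set X), (𝒰.card : ℝ≥0∞) = m ∧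
    (∀ U ∈ 𝒰, EMetric.diam U ≤ ENNReal.ofReal r) ∧ F ⊆ ⋃ U ∈ 𝒰, U}

/-- Regularized Assouad spectrum `dim_{A,reg}^θ(F)`. -/
def dimAreg {X : Type*} [PseudoMetricSpace X] (θ : ℝ) (F : Set X) : ℝ :=
  sInf {α : ℝ | 0 < α ∧ ∃ C : ℝ, 0 < C ∧ ∀ x ∈ F, ∀ r R : ℝ,
    0 < r → r ≤ R ^ (1/θ) → R ^ (1/θ) < R → R < 1 →
    coverN (closedBall x R ∩ F) r ≤ ENNReal.ofReal (C * (R/r) ^ α)}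

/-- (Unregularized) Assouad spectrum `dim_A^θ(F)`. -/
def dimAspec {X : Type*} [PseudoMetricSpace X] (θ : ℝ) (F : Set X) : ℝ :=
  sInf {α : ℝ | 0 < α ∧ ∃ C : ℝ, 0 < C ∧ ∀ x ∈ F, ∀ R : ℝ, 0 < R → R < 1 →
    coverN (closedBall x R ∩ F) (R ^ (1/θ)) ≤ ENNReal.ofReal (C * (R / R ^ (1/θ)) ^ α)}

/-- Upper box-counting dimension of a (bounded) set. -/
def dimBupper {X : Type*} [PseudoMetricSpace X] (F : Set X) : ℝ :=
  sInf {α : ℝ | 0 < α ∧ ∃ C : ℝ, 0 < C ∧ ∀ r : ℝ, 0 < r → r ≤ diam F →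
    coverN F r ≤ ENNReal.ofReal (C * r ^ (-α))}

/-- Assouad dimension. -/
def dimA {X : Type*} [PseudoMetricSpace X] (F : Set X) : ℝ :=
  sInf {α : ℝ | 0 < α ∧ ∃ C : ℝ, 0 < C ∧ ∀ x ∈ F, ∀ r R : ℝ, 0 < r → r ≤ R →
    coverN (closedBall x R ∩ F) r ≤ ENNReal.ofReal (C * (R/r) ^ α)}

/-- Quasi-Assouad dimension: `sup_{0<θ<1} dim_{A,reg}^θ(F)`. -/
def dimqA {X : Type*} [PseudoMetricSpace X] (F : Set X) : ℝ :=
  sSup ((fun θ => dimAreg θ F) '' Ioo (0:ℝ) 1)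

open Classical in
/-- Phase-transition parameter `ρ(F)`. -/
def rhoPT {X : Type*} [PseudoMetricSpace X] (F : Set X) : ℝ :=
  if ∃ θ ∈ Ioo (0:ℝ) 1, dimAreg θ F = dimqA F
  then sInf {θ | θ ∈ Ioo (0:ℝ) 1 ∧ dimAreg θ F = dimqA F}
  else 1

/-- The axes-parallel cube `Q(x,R) = ∏ [xᵢ - R, xᵢ + R]`. -/
def cubeQ {n : ℕ} (x : EuclideanSpace ℝ (Fin n)) (R : ℝ) : Set (EuclideanSpace ℝ (Fin n)) :=
  {y | ∀ i, x i - R ≤ y i ∧ y i ≤ x i + R}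

/-- The generation-`m` dyadic subcube of `Q(x,R)` with index `k`. -/
def dyadicCube {n : ℕ} (x : EuclideanSpace ℝ (Fin n)) (R : ℝ) (m : ℕ)
    (k : Fin n → Fin (2 ^ m)) : Set (EuclideanSpace ℝ (Fin n)) :=
  {y | ∀ i, x i - R + (k i : ℝ) * (2 * R / 2 ^ m) ≤ y i ∧
        y i ≤ x i - R + ((k i : ℝ) + 1) * (2 * R / 2 ^ m)}

/-- `N_d(B(x,R) ∩ F, m)`: the number of generation-`m` dyadic subcubes of `Q(x,R)`
that intersect `B(x,R) ∩ F`. -/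
def Nd {n : ℕ} (x : EuclideanSpace ℝ (Fin n)) (R : ℝ)
    (F : Set (EuclideanSpace ℝ (Fin n))) (m : ℕ) : ℕ :=
  Nat.card {k : Fin n → Fin (2 ^ m) // (dyadicCube x R m k ∩ (closedBall x R ∩ F)).Nonempty}

/-- `f` is `η`-quasisymmetric on the set `S`. -/
def QSOn {X Y : Type*} [PseudoMetricSpace X] [PseudoMetricSpace Y]
    (η : ℝ → ℝ) (f : X → Y) (S : Set X) : Prop :=
  ∀ x ∈ S, ∀ y ∈ S, ∀ z ∈ S, x ≠ z →
    dist (f x) (f y) ≤ η (dist x y / dist x z) * dist (f x) (f z)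

/-- Distance between two sets. -/
def setDist {X : Type*} [PseudoMetricSpace X] (A B : Set X) : ℝ :=
  sInf {d : ℝ | ∃ a ∈ A, ∃ b ∈ B, d = dist a b}

end

section Basic
variable {X : Type*} [PseudoMetricSpace X]

lemma coverN_le_card {F : Set X} {r : ℝ} (𝒰 : Finset (Set X))
    (hdiam : ∀ U ∈ 𝒰, EMetric.diam U ≤ ENNReal.ofReal r) (hcov : F ⊆ ⋃ U ∈ 𝒰, U) :
    coverN F r ≤ (𝒰.card : ℝ≥0∞) :=
  sInf_le ⟨𝒰, rfl, hdiam, hcov⟩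

lemma coverN_mono {F G : Set X} {r : ℝ} (h : F ⊆ G) : coverN F r ≤ coverN G r := by
  apply sInf_le_sInf
  rintro m ⟨𝒰, rfl, hd, hc⟩
  exact ⟨𝒰, rfl, hd, h.trans hc⟩

lemma coverN_anti {F : Set X} {r r' : ℝ} (h : r ≤ r') : coverN F r' ≤ coverN F r := by
  apply sInf_le_sInf
  rintro m ⟨𝒰, rfl, hd, hc⟩
  exact ⟨𝒰, rfl, fun U hU => (hd U hU).trans (ENNReal.ofReal_le_ofReal h), hc⟩

lemma coverN_le_nat {F : Set X} {r : ℝ} {N : ℕ} (h : coverN F r ≤ (N : ℝ≥0∞)) :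
    ∃ 𝒰 : Finset (Set X), 𝒰.card ≤ N ∧
      (∀ U ∈ 𝒰, EMetric.diam U ≤ ENNReal.ofReal r) ∧ F ⊆ ⋃ U ∈ 𝒰, U := by
  have h2 : coverN F r < (N : ℝ≥0∞) + 1 := lt_of_le_of_lt h (by
    exact ENNReal.lt_add_right (by simp) one_ne_zero)
  rw [coverN, sInf_lt_iff] at h2
  obtain ⟨m, ⟨𝒰, rfl, hd, hc⟩, hlt⟩ := h2
  refine ⟨𝒰, ?_, hd, hc⟩
  have : (𝒰.card : ℝ≥0∞) < ((N + 1 : ℕ) : ℝ≥0∞) := by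
    push_cast; exact hlt
  have := (Nat.cast_lt (α := ℝ≥0∞)).mp this
  omega

lemma coverN_le_floor {F : Set X} {r c : ℝ} (h : coverN F r ≤ ENNReal.ofReal c) :
    coverN F r ≤ ((⌊c⌋₊ : ℕ) : ℝ≥0∞) := by
  by_contra hlt
  push_neg at hlt
  have h1 : ((⌊c⌋₊ : ℕ) : ℝ≥0∞) + 1 ≤ coverN F r := by
    rw [coverN] at hlt ⊢
    refine le_sInf fun m hm => ?_
    obtain ⟨𝒰, rfl, _, _⟩ := hm
    have : ((⌊c⌋₊ : ℕ) : ℝ≥0∞) < (𝒰.card : ℝ≥0∞) := lt_of_lt_of_le hlt (sInf_le ⟨𝒰, rfl, ‹_›, ‹_›⟩)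
    have := (Nat.cast_lt (α := ℝ≥0∞)).mp this
    have h2 : (⌊c⌋₊ + 1 : ℕ) ≤ 𝒰.card := this
    calc ((⌊c⌋₊ : ℕ) : ℝ≥0∞) + 1 = ((⌊c⌋₊ + 1 : ℕ) : ℝ≥0∞) := by push_cast; ring
    _ ≤ _ := by exact_mod_cast Nat.cast_le.mpr h2
  have h3 : ENNReal.ofReal c < ((⌊c⌋₊ : ℕ) : ℝ≥0∞) + 1 := by
    calc ENNReal.ofReal c < ENNReal.ofReal ((⌊c⌋₊ : ℝ) + 1) := by
          refine (ENNReal.ofReal_lt_ofReal_iff (by positivity)).mpr (Nat.lt_floor_add_one c)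
    _ = ((⌊c⌋₊ : ℕ) : ℝ≥0∞) + 1 := by
          rw [ENNReal.ofReal_add (by positivity) zero_le_one]
          simp
  exact absurd ((h.trans_lt h3).trans_le h1) (lt_irrefl _)

end Basic

section Chain
variable {X : Type*} [PseudoMetricSpace X]

lemma coverN_chain {F G : Set X} (hGF : G ⊆ F) {t r c₁ c₂ : ℝ} (ht : 0 ≤ t)
    (hc₁ : 0 ≤ c₁) (hc₂ : 0 ≤ c₂)
    (h₁ : coverN G t ≤ ENNReal.ofReal c₁)
    (h₂ : ∀ y ∈ F, coverN (closedBall y t ∩ F) r ≤ ENNReal.ofReal c₂) :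
    coverN G r ≤ ENNReal.ofReal (c₁ * c₂) := by
  classical
  obtain ⟨𝒰, hcard, hdiam, hcov⟩ := coverN_le_nat (coverN_le_floor h₁)
  have key : ∀ U : Set X, ∃ 𝒱 : Finset (Set X), 𝒱.card ≤ ⌊c₂⌋₊ ∧
      (∀ W ∈ 𝒱, EMetric.diam W ≤ ENNReal.ofReal r) ∧
      (U ∈ 𝒰 → U ∩ G ⊆ ⋃ W ∈ 𝒱, W) := by
    intro U
    by_cases hU : U ∈ 𝒰
    · by_cases hne : (U ∩ G).Nonempty
      · obtain ⟨y, hyU, hyG⟩ := hne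
        have hyF : y ∈ F := hGF hyG
        have hsub : U ∩ G ⊆ closedBall y t ∩ F := by
          rintro z ⟨hzU, hzG⟩
          refine ⟨?_, hGF hzG⟩
          rw [mem_closedBall]
          have h1 : edist z y ≤ ENNReal.ofReal t :=
            (EMetric.edist_le_diam_of_mem hzU hyU).trans (hdiam U hU)
          rw [edist_dist] at h1
          have := (ENNReal.ofReal_le_ofReal_iff ht).mp h1
          exact this
        have := (coverN_mono hsub).trans (h₂ y hyF)
        obtain ⟨𝒱, h1, h2, h3⟩ := coverN_le_nat (coverN_le_floor this)
        exact ⟨𝒱, h1, h2, fun _ => h3⟩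
      · exact ⟨∅, by simp, by simp, fun _ => by
          rw [not_nonempty_iff_eq_empty] at hne; simp [hne]⟩
    · exact ⟨∅, by simp, by simp, fun h => absurd h hU⟩
  choose V hV1 hV2 hV3 using key
  set 𝒲 : Finset (Set X) := 𝒰.biUnion V with h𝒲
  have hWdiam : ∀ W ∈ 𝒲, EMetric.diam W ≤ ENNReal.ofReal r := by
    intro W hW
    rw [h𝒲, Finset.mem_biUnion] at hW
    obtain ⟨U, hU, hWU⟩ := hW
    exact hV2 U W hWU
  have hWcov : G ⊆ ⋃ W ∈ 𝒲, W := by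
    intro z hz
    obtain ⟨U, hU, hzU⟩ := by
      have := hcov hz
      simpa using this
    have := hV3 U hU ⟨hzU, hz⟩
    simp only [mem_iUnion] at this ⊢
    obtain ⟨W, hW, hzW⟩ := this
    exact ⟨W, Finset.mem_biUnion.mpr ⟨U, hU, hW⟩, hzW⟩
  have hcard2 : 𝒲.card ≤ ⌊c₁⌋₊ * ⌊c₂⌋₊ := by
    calc 𝒲.card ≤ ∑ U ∈ 𝒰, (V U).card := Finset.card_biUnion_le
    _ ≤ ∑ _U ∈ 𝒰, ⌊c₂⌋₊ := Finset.sum_le_sum fun U _ => hV1 U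
    _ = 𝒰.card * ⌊c₂⌋₊ := by rw [Finset.sum_const, smul_eq_mul]
    _ ≤ ⌊c₁⌋₊ * ⌊c₂⌋₊ := Nat.mul_le_mul_right _ hcard
  calc coverN G r ≤ (𝒲.card : ℝ≥0∞) := coverN_le_card 𝒲 hWdiam hWcov
  _ ≤ ((⌊c₁⌋₊ * ⌊c₂⌋₊ : ℕ) : ℝ≥0∞) := by exact_mod_cast Nat.cast_le.mpr hcard2
  _ ≤ ENNReal.ofReal (c₁ * c₂) := by
      rw [← ENNReal.ofReal_natCast]
      apply ENNReal.ofReal_le_ofReal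
      push_cast
      exact mul_le_mul (Nat.floor_le hc₁) (Nat.floor_le hc₂) (by positivity) hc₁

end Chain

section Euclid
variable {n : ℕ}

lemma abs_coord_le_dist (y x : EuclideanSpace ℝ (Fin n)) (i : Fin n) :
    |y i - x i| ≤ dist y x := by
  rw [EuclideanSpace.dist_eq]
  have h1 : |y i - x i| = Real.sqrt ((dist (y i) (x i))^2) := by
    rw [Real.dist_eq, Real.sqrt_sq_eq_abs, abs_abs]
  rw [h1]
  apply Real.sqrt_le_sqrt
  exact Finset.single_le_sum (f := fun j => dist (y j) (x j) ^ 2)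
    (fun j _ => sq_nonneg _) (Finset.mem_univ i)

lemma euclid_cover (x : EuclideanSpace ℝ (Fin n)) {R r : ℝ} (hr : 0 < r) (hrR : r ≤ R) :
    coverN (closedBall x R) r ≤ ENNReal.ofReal ((3*(n+1):ℝ)^n * (R/r) ^ (n:ℝ)) := by
  classical
  have hR : 0 < R := hr.trans_le hrR
  set s : ℝ := r / (n+1) with hs
  have hs0 : 0 < s := by positivity
  set m : ℕ := ⌊2*R/s⌋₊ + 1 with hm
  -- the grid pieces
  set P : (Fin n → Fin m) → Set (EuclideanSpace ℝ (Fin n)) :=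
    fun k => {z | ∀ i, x i - R + (k i : ℝ) * s ≤ z i ∧ z i ≤ x i - R + ((k i : ℝ) + 1) * s}
    with hP
  set 𝒰 : Finset (Set (EuclideanSpace ℝ (Fin n))) := Finset.image P Finset.univ with h𝒰
  have hdiam : ∀ U ∈ 𝒰, EMetric.diam U ≤ ENNReal.ofReal r := by
    intro U hU
    rw [h𝒰, Finset.mem_image] at hU
    obtain ⟨k, _, rfl⟩ := hU
    apply EMetric.diam_le
    intro z hz w hw
    rw [edist_dist]
    apply ENNReal.ofReal_le_ofReal
    rw [EuclideanSpace.dist_eq]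
    have hcoord : ∀ i, dist (z i) (w i) ^ 2 ≤ s^2 := by
      intro i
      obtain ⟨h1, h2⟩ := hz i
      obtain ⟨h3, h4⟩ := hw i
      have : |z i - w i| ≤ s := by
        rw [abs_le]; constructor <;> nlinarith
      calc dist (z i) (w i) ^ 2 = |z i - w i| ^ 2 := by rw [Real.dist_eq]
      _ ≤ s ^ 2 := by nlinarith [abs_nonneg (z i - w i)]
    calc Real.sqrt (∑ i, dist (z i) (w i) ^ 2) ≤ Real.sqrt (∑ _i : Fin n, s^2) :=
          Real.sqrt_le_sqrt (Finset.sum_le_sum fun i _ => hcoord i)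
    _ = Real.sqrt ((n : ℝ) * s^2) := by rw [Finset.sum_const]; simp [nsmul_eq_mul]
    _ ≤ Real.sqrt (((n+1) : ℝ)^2 * s^2) := by
          apply Real.sqrt_le_sqrt
          have : (n:ℝ) ≤ ((n+1):ℝ)^2 := by nlinarith [Nat.cast_nonneg (α := ℝ) n]
          nlinarith [sq_nonneg s]
    _ = ((n+1) : ℝ) * s := by
          rw [← mul_pow, Real.sqrt_sq (by positivity)]
    _ = r := by rw [hs]; field_simp
  have hcov : closedBall x R ⊆ ⋃ U ∈ 𝒰, U := by
    intro y hy
    rw [mem_closedBall] at hy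
    have hcoord : ∀ i : Fin n, 0 ≤ y i - x i + R ∧ y i - x i + R ≤ 2*R := by
      intro i
      have h := abs_coord_le_dist y x i
      rw [abs_le] at h
      constructor <;> nlinarith [h.1, h.2, hy]
    have hmem : ∀ i : Fin n, ⌊(y i - x i + R)/s⌋₊ < m := by
      intro i
      have h1 : ⌊(y i - x i + R)/s⌋₊ ≤ ⌊2*R/s⌋₊ :=
        Nat.floor_mono ((div_le_div_iff_of_pos_right hs0).mpr (hcoord i).2)
      omega
    set k : Fin n → Fin m := fun i => ⟨⌊(y i - x i + R)/s⌋₊, hmem i⟩ with hk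
    have hyP : y ∈ P k := by
      intro i
      set t : ℝ := y i - x i + R with hti
      have ht0 : 0 ≤ t := (hcoord i).1
      have h1 : ((⌊t/s⌋₊ : ℝ)) * s ≤ t := by
        have := Nat.floor_le (div_nonneg ht0 hs0.le)
        calc ((⌊t/s⌋₊ : ℝ)) * s ≤ (t/s) * s := by nlinarith
        _ = t := by field_simp
      have h2 : t ≤ ((⌊t/s⌋₊ : ℝ) + 1) * s := by
        have := (Nat.lt_floor_add_one (t/s)).le
        calc t = (t/s) * s := by field_simp
        _ ≤ ((⌊t/s⌋₊ : ℝ) + 1) * s := by nlinarith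
      constructor
      · have : (k i : ℝ) = (⌊t/s⌋₊ : ℝ) := by rw [hk]
        rw [this]; linarith
      · have : (k i : ℝ) = (⌊t/s⌋₊ : ℝ) := by rw [hk]
        rw [this]; linarith
    simp only [mem_iUnion]
    exact ⟨P k, Finset.mem_image.mpr ⟨k, Finset.mem_univ _, rfl⟩, hyP⟩
  calc coverN (closedBall x R) r ≤ (𝒰.card : ℝ≥0∞) := coverN_le_card 𝒰 hdiam hcov
  _ ≤ ((m^n : ℕ) : ℝ≥0∞) := by
      have h1 : 𝒰.card ≤ (Finset.univ : Finset (Fin n → Fin m)).card := Finset.card_image_le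
      have h2 : (Finset.univ : Finset (Fin n → Fin m)).card = m^n := by
        simp [Fintype.card_fun]
      exact_mod_cast Nat.cast_le.mpr (h1.trans_eq h2)
  _ ≤ ENNReal.ofReal ((3*(n+1):ℝ)^n * (R/r) ^ (n:ℝ)) := by
      rw [← ENNReal.ofReal_natCast]
      apply ENNReal.ofReal_le_ofReal
      have hcast : ((m^n : ℕ) : ℝ) = ((m:ℕ):ℝ)^n := by push_cast; ring
      rw [hcast]
      have hm1 : (m:ℝ) ≤ 3*(n+1)*(R/r) := by
        have h1 : (m:ℝ) = (⌊2*R/s⌋₊ : ℝ) + 1 := by rw [hm]; push_cast; ring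
        have h2 : (⌊2*R/s⌋₊ : ℝ) ≤ 2*R/s := Nat.floor_le (by positivity)
        
        have h3 : 2*R/s = 2*(n+1)*(R/r) := by rw [hs]; field_simp
        have h4 : (1:ℝ) ≤ (n+1)*(R/r) := by
          have : (1:ℝ) ≤ R/r := (one_le_div hr).mpr hrR
          nlinarith [Nat.cast_nonneg (α := ℝ) n]
        nlinarith
      have hRr : (0:ℝ) ≤ R/r := by positivity
      calc ((m:ℝ))^n ≤ (3*(n+1)*(R/r))^n := by
            apply pow_le_pow_left₀ (by positivity) hm1
      _ = (3*(n+1):ℝ)^n * (R/r)^n := by rw [mul_pow]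
      _ = (3*(n+1):ℝ)^n * (R/r)^(n:ℝ) := by rw [Real.rpow_natCast]

end Euclid


-- to be appended before theorem: spectrum set machinery
noncomputable section SpecSets
open Set Metric
open scoped ENNReal

def SReg {X : Type*} [PseudoMetricSpace X] (θ : ℝ) (F : Set X) : Set ℝ :=
  {α : ℝ | 0 < α ∧ ∃ C : ℝ, 0 < C ∧ ∀ x ∈ F, ∀ r R : ℝ,
    0 < r → r ≤ R ^ (1/θ) → R ^ (1/θ) < R → R < 1 →
    coverN (closedBall x R ∩ F) r ≤ ENNReal.ofReal (C * (R/r) ^ α)}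

def SSpec {X : Type*} [PseudoMetricSpace X] (θ : ℝ) (F : Set X) : Set ℝ :=
  {α : ℝ | 0 < α ∧ ∃ C : ℝ, 0 < C ∧ ∀ x ∈ F, ∀ R : ℝ, 0 < R → R < 1 →
    coverN (closedBall x R ∩ F) (R ^ (1/θ)) ≤ ENNReal.ofReal (C * (R / R ^ (1/θ)) ^ α)}

lemma dimAreg_eq {X : Type*} [PseudoMetricSpace X] (θ : ℝ) (F : Set X) :
    dimAreg θ F = sInf (SReg θ F) := rfl

lemma dimAspec_eq {X : Type*} [PseudoMetricSpace X] (θ : ℝ) (F : Set X) :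
    dimAspec θ F = sInf (SSpec θ F) := rfl

variable {X : Type*} [PseudoMetricSpace X]

lemma SReg_subset_SSpec {θ θ' : ℝ} {F : Set X} (hθ'0 : 0 < θ') (hθ' : θ' < θ) (hθ1 : θ < 1) :
    SReg θ F ⊆ SSpec θ' F := by
  rintro α ⟨hα, C, hC, hb⟩
  refine ⟨hα, C, hC, fun x hx R hR0 hR1 => ?_⟩
  have hθ0 : 0 < θ := lt_trans hθ'0 hθ'
  apply hb x hx (R ^ (1/θ')) R
  · exact Real.rpow_pos_of_pos hR0 _
  · exact Real.rpow_le_rpow_of_exponent_ge hR0 hR1.le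
      (by rw [div_le_div_iff₀ hθ0 hθ'0]; nlinarith)
  · calc R ^ (1/θ) < R ^ (1:ℝ) :=
        Real.rpow_lt_rpow_of_exponent_gt hR0 hR1 (by rw [lt_div_iff₀ hθ0]; nlinarith)
    _ = R := Real.rpow_one R
  · exact hR1

lemma SSpec_bddBelow (θ : ℝ) (F : Set X) : BddBelow (SSpec θ F) :=
  ⟨0, fun a ha => ha.1.le⟩

lemma SReg_bddBelow (θ : ℝ) (F : Set X) : BddBelow (SReg θ F) :=
  ⟨0, fun a ha => ha.1.le⟩

end SpecSets

noncomputable section Nonempty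
open Set Metric
open scoped ENNReal

lemma SReg_nonempty {n : ℕ} (E : Set (EuclideanSpace ℝ (Fin n))) {θ : ℝ}
    (hθ0 : 0 < θ) (hθ1 : θ < 1) : ((n:ℝ) + 1) ∈ SReg θ E := by
  refine ⟨by positivity, (3*(n+1):ℝ)^n, by positivity, fun x hx r R hr hrR hRθ hR1 => ?_⟩
  have hR0 : 0 < R := by
    by_contra h
    push_neg at h
    have : R ^ (1/θ) ≤ 0 := le_of_lt (lt_of_lt_of_le hRθ h)
    exact absurd (lt_of_lt_of_le hr (hrR.trans this)) (lt_irrefl 0)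
  have hrR2 : r ≤ R := hrR.trans (hRθ.le.trans (le_refl R))
  have h1 : (1:ℝ) ≤ R / r := (one_le_div hr).mpr hrR2
  calc coverN (closedBall x R ∩ E) r ≤ coverN (closedBall x R) r :=
        coverN_mono inter_subset_left
  _ ≤ ENNReal.ofReal ((3*(n+1):ℝ)^n * (R/r) ^ (n:ℝ)) := euclid_cover x hr hrR2
  _ ≤ ENNReal.ofReal ((3*(n+1):ℝ)^n * (R/r) ^ ((n:ℝ)+1)) := by
      apply ENNReal.ofReal_le_ofReal
      have := Real.rpow_le_rpow_of_exponent_le h1 (le_of_lt (lt_add_one (n:ℝ)))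
      nlinarith [pow_pos (by positivity : (0:ℝ) < 3*((n:ℝ)+1)) n]
  end Nonempty


noncomputable section Unif
open Set Metric
open scoped ENNReal

lemma one_le_prod_real {s : Finset ℕ} {f : ℕ → ℝ} (hf : ∀ j ∈ s, 1 ≤ f j) :
    1 ≤ ∏ j ∈ s, f j := by
  classical
  induction s using Finset.induction_on with
  | empty => simp
  | @insert a s ha ih =>
    rw [Finset.prod_insert ha]
    have h1 := hf a (Finset.mem_insert_self a s)
    have h2 := ih (fun j hj => hf j (Finset.mem_insert_of_mem hj))
    nlinarith

lemma single_le_prod_real {f : ℕ → ℝ} (hf : ∀ j, 1 ≤ f j) {N i : ℕ} (hi : i < N) :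
    f i ≤ ∏ j ∈ Finset.range N, f j := by
  classical
  rw [← Finset.mul_prod_erase _ _ (Finset.mem_range.mpr hi)]
  have h2 : 1 ≤ ∏ j ∈ (Finset.range N).erase i, f j :=
    one_le_prod_real (fun j _ => hf j)
  nlinarith [hf i]

lemma unif {n : ℕ} (E : Set (EuclideanSpace ℝ (Fin n))) {θ s ε₁ : ℝ}
    (hθ0 : 0 < θ) (hθ1 : θ < 1) (hε₁ : 0 < ε₁) (hs0 : 0 ≤ s)
    (hex : ∀ θ' : ℝ, 0 < θ' → θ' < θ → ∃ β Cc : ℝ, 0 < β ∧ β < s + ε₁ ∧ 0 < Cc ∧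
      ∀ y ∈ E, ∀ R : ℝ, 0 < R → R < 1 →
        coverN (closedBall y R ∩ E) (R ^ (1/θ')) ≤
          ENNReal.ofReal (Cc * (R / R ^ (1/θ')) ^ β)) :
    ∃ C : ℝ, 1 ≤ C ∧ ∀ γ : ℝ, θ^2 < γ → γ ≤ θ → ∀ y ∈ E, ∀ t : ℝ, 0 < t → t < 1 →
      coverN (closedBall y t ∩ E) (t ^ (1/γ)) ≤
        ENNReal.ofReal (C * (t / t ^ (1/γ)) ^ ((s+ε₁)*(1+ε₁))) := by
  classical
  set ε₂ : ℝ := ε₁ * (1-θ) with hε₂def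
  have hε₂ : 0 < ε₂ := by rw [hε₂def]; nlinarith
  set g : ℕ → ℝ := fun i => θ / (1+ε₂)^(i+1) with hgdef
  have hg0 : ∀ i, 0 < g i := fun i => by positivity
  have hgθ : ∀ i, g i < θ := fun i => by
    rw [hgdef]
    exact div_lt_self hθ0 (one_lt_pow₀ (by linarith) (by omega))
  choose β C hβ0 hβlt hC0 hprop using fun i => hex (g i) (hg0 i) (hgθ i)
  obtain ⟨N₀, hN₀⟩ : ∃ N₀ : ℕ, 1/θ < (1+ε₂)^N₀ :=
    pow_unbounded_of_one_lt (1/θ) (by linarith)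
  set CU : ℝ := ∏ i ∈ Finset.range (N₀+1), max (C i) 1 with hCUdef
  have hCU1 : 1 ≤ CU := by
    rw [hCUdef]
    exact one_le_prod_real (fun j _ => le_max_right _ _)
  have hCUi : ∀ i ≤ N₀, C i ≤ CU := by
    intro i hi
    rw [hCUdef]
    calc C i ≤ max (C i) 1 := le_max_left _ _
    _ ≤ _ := single_le_prod_real (f := fun j => max (C j) 1)
          (fun j => le_max_right _ _) (by omega : i < N₀ + 1)
  refine ⟨CU, hCU1, fun γ hγlo hγhi y hy t ht0 ht1 => ?_⟩
  have hγ0 : 0 < γ := lt_trans (by positivity) hγlo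
  -- find the grid point below γ
  have hwit : g N₀ ≤ γ := by
    have h1 : (1+ε₂)^(N₀+1) > 1/θ := lt_of_lt_of_le hN₀ (pow_le_pow_right₀ (by linarith) (by omega))
    have h2 : g N₀ < θ^2 := by
      rw [hgdef]
      rw [div_lt_iff₀ (by positivity)]
      calc θ = θ^2 * (1/θ) := by field_simp
      _ < θ^2 * (1+ε₂)^(N₀+1) := by
          apply mul_lt_mul_of_pos_left h1 (by positivity)
    linarith
  have hfind : ∃ i, g i ≤ γ := ⟨N₀, hwit⟩
  set i : ℕ := Nat.find hfind with hidef
  have hgiγ : g i ≤ γ := Nat.find_spec hfind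
  have hiN₀ : i ≤ N₀ := Nat.find_le hwit
  have hup : γ ≤ g i * (1+ε₂) := by
    rcases Nat.eq_zero_or_pos i with h0 | hpos
    · have : g 0 * (1+ε₂) = θ := by
        rw [hgdef]; simp only [pow_one, zero_add]
        field_simp
      rw [h0, this]; exact hγhi
    · have hmin : ¬ (g (i-1) ≤ γ) := Nat.find_min hfind (by omega)
      push_neg at hmin
      have : g (i-1) = g i * (1+ε₂) := by
        rw [hgdef]
        have h2 : i - 1 + 1 + 1 = i + 1 := by omega
        simp only
        rw [show i - 1 + 1 = i by omega, pow_succ (1+ε₂) i]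
        field_simp
      linarith
  set gi : ℝ := g i with hgidef
  have hgi0 : 0 < gi := hg0 i
  have hgi1 : gi < 1 := lt_trans (hgθ i) hθ1
  -- exponent inequality
  set α' : ℝ := (s+ε₁)*(1+ε₁) with hα'def
  have hγ1 : γ < 1 := lt_of_le_of_lt hγhi hθ1
  have hkey : β i * (1/gi - 1) ≤ α' * (1/γ - 1) := by
    have h1 : 1/gi ≤ (1+ε₂)/γ := by
      rw [div_le_div_iff₀ hgi0 hγ0]
      linarith [hup]
    have h2 : ε₂/γ ≤ ε₁ * (1/γ - 1) := by
      rw [hε₂def]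
      rw [div_le_iff₀ hγ0] at *
      have : (1/γ - 1) * γ = 1 - γ := by field_simp
      nlinarith [hγhi]
    have h3 : 1/gi - 1 ≤ (1+ε₁)*(1/γ - 1) := by
      have : (1+ε₂)/γ = 1/γ + ε₂/γ := by ring
      nlinarith
    have h4 : (1:ℝ) ≤ 1/γ := one_le_one_div hγ0 hγ1.le
    nlinarith [hβ0 i, hβlt i, hs0, hε₁, h3, h4,
      one_le_one_div hgi0 hgi1.le]
  -- covering computation
  have hexp : t ^ ((1:ℝ)/gi) ≤ t ^ ((1:ℝ)/γ) :=
    Real.rpow_le_rpow_of_exponent_ge ht0 ht1.le (one_div_le_one_div_of_le hgi0 hgiγ)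
  calc coverN (closedBall y t ∩ E) (t ^ ((1:ℝ)/γ))
      ≤ coverN (closedBall y t ∩ E) (t ^ ((1:ℝ)/gi)) := coverN_anti hexp
  _ ≤ ENNReal.ofReal (C i * (t / t ^ ((1:ℝ)/gi)) ^ (β i)) := hprop i y hy t ht0 ht1
  _ ≤ ENNReal.ofReal (CU * (t / t ^ ((1:ℝ)/γ)) ^ α') := by
      apply ENNReal.ofReal_le_ofReal
      have e1 : t / t ^ ((1:ℝ)/gi) = t ^ (1 - 1/gi) := by
        rw [Real.rpow_sub ht0, Real.rpow_one]
      have e2 : t / t ^ ((1:ℝ)/γ) = t ^ (1 - 1/γ) := by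
        rw [Real.rpow_sub ht0, Real.rpow_one]
      rw [e1, e2, ← Real.rpow_mul ht0.le, ← Real.rpow_mul ht0.le]
      have hmono : t ^ ((1 - 1/gi) * β i) ≤ t ^ ((1 - 1/γ) * α') :=
        Real.rpow_le_rpow_of_exponent_ge ht0 ht1.le (by linarith [hkey])
      exact mul_le_mul (hCUi i hiN₀) hmono (Real.rpow_nonneg ht0.le _) (by linarith)

end Unif


noncomputable section MainSmall
open Set Metric
open scoped ENNReal

lemma log_absorb {c₁ c₂ x : ℝ} (hc₁ : 0 ≤ c₁) (hc₂ : 0 < c₂) (hx : 1 ≤ x) :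
    c₁ * Real.log x ≤ c₁^2/c₂ + c₂ * (x - 1) := by
  have hx0 : 0 < x := lt_of_lt_of_le one_pos hx
  have hsq : Real.sqrt x ^ 2 = x := Real.sq_sqrt hx0.le
  have hs1 : 1 ≤ Real.sqrt x := by
    rw [show (1:ℝ) = Real.sqrt 1 by simp]
    exact Real.sqrt_le_sqrt hx
  set u : ℝ := Real.sqrt x - 1 with hu
  have hu0 : 0 ≤ u := by linarith
  have hlog : Real.log x ≤ 2 * u := by
    have h1 : Real.log (Real.sqrt x) ≤ Real.sqrt x - 1 :=
      Real.log_le_sub_one_of_pos (by linarith)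
    have h2 : Real.log (Real.sqrt x) = Real.log x / 2 := Real.log_sqrt hx0.le
    rw [h2] at h1; linarith
  have hx1 : x - 1 = u^2 + 2*u := by nlinarith [hsq]
  have key : c₂ * (c₁ * Real.log x) ≤ c₂ * (c₁^2/c₂ + c₂ * (x-1)) := by
    have hdiv : c₂ * (c₁^2/c₂) = c₁^2 := by field_simp
    have h3 : c₂ * (c₁ * Real.log x) ≤ c₂ * (c₁ * (2*u)) := by
      apply mul_le_mul_of_nonneg_left _ hc₂.le
      exact mul_le_mul_of_nonneg_left hlog hc₁
    have expand : c₂ * (c₁^2/c₂ + c₂*(x-1)) = c₁^2 + c₂^2*u^2 + 2*c₂^2*u := by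
      rw [mul_add, hdiv, hx1]; ring
    rw [expand]
    nlinarith [sq_nonneg (c₂*u - c₁), h3, mul_nonneg (mul_nonneg hc₂.le hc₂.le) hu0]
  exact le_of_mul_le_mul_left key hc₂

set_option maxHeartbeats 1000000 in
lemma main_small {n : ℕ} (E : Set (EuclideanSpace ℝ (Fin n))) {θ ε CU α' : ℝ}
    (hθ0 : 0 < θ) (hθ1 : θ < 1) (hε : 0 < ε) (hCU : 1 ≤ CU) (hα' : 0 ≤ α')
    (hunif : ∀ γ : ℝ, θ^2 < γ → γ ≤ θ → ∀ y ∈ E, ∀ t : ℝ, 0 < t → t < 1 →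
      coverN (closedBall y t ∩ E) (t ^ (1/γ)) ≤
        ENNReal.ofReal (CU * (t / t ^ (1/γ)) ^ α')) :
    ∃ C : ℝ, 0 < C ∧ ∀ x ∈ E, ∀ r R : ℝ, 0 < r → r ≤ R ^ (1/θ) → 0 < R → R ≤ 1/2 →
      coverN (closedBall x R ∩ E) r ≤ ENNReal.ofReal (C * (R/r) ^ (α' + ε)) := by
  have hb : 0 < -Real.log θ := by
    have := Real.log_neg hθ0 hθ1; linarith
  set b : ℝ := -Real.log θ with hbdef
  set c₁ : ℝ := Real.log CU / b with hc₁def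
  have hc₁0 : 0 ≤ c₁ := div_nonneg (Real.log_nonneg hCU) hb.le
  set c₂ : ℝ := ε * Real.log 2 with hc₂def
  have hc₂0 : 0 < c₂ := by
    have := Real.log_pos (by norm_num : (1:ℝ) < 2)
    positivity
  refine ⟨(3*(n+1):ℝ)^n * Real.exp (c₁^2/c₂), by positivity, fun x hx r R hr hrθ hR0 hR12 => ?_⟩
  have hR1 : R < 1 := by linarith
  have hRθR : R ^ (1/θ) < R := by
    calc R ^ (1/θ) < R ^ (1:ℝ) :=
      Real.rpow_lt_rpow_of_exponent_gt hR0 hR1 (one_lt_one_div hθ0 hθ1)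
    _ = R := Real.rpow_one R
  have hr1 : r < 1 := by linarith [hrθ.trans_lt hRθR]
  have hlogR : Real.log R < 0 := Real.log_neg hR0 hR1
  have hlogr : Real.log r < 0 := Real.log_neg hr hr1
  set X : ℝ := Real.log r / Real.log R with hXdef
  have hX1θ : 1/θ ≤ X := by
    rw [hXdef, le_div_iff_of_neg hlogR]
    have h1 : Real.log r ≤ Real.log (R ^ (1/θ)) :=
      Real.log_le_log hr hrθ
    rw [Real.log_rpow hR0] at h1
    linarith
  have hX1 : 1 < X := lt_of_lt_of_le (one_lt_one_div hθ0 hθ1) hX1θ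
  have hX0 : 0 < X := lt_trans one_pos hX1
  have hlogX : b ≤ Real.log X := by
    have h1 : Real.log (1/θ) ≤ Real.log X := Real.log_le_log (by positivity) hX1θ
    rw [one_div, Real.log_inv] at h1
    linarith
  have hlogX0 : 0 < Real.log X := lt_of_lt_of_le hb hlogX
  set m : ℕ := ⌊Real.log X / b⌋₊ with hmdef
  have hm1 : 1 ≤ m := Nat.le_floor (by
    rw [Nat.cast_one, le_div_iff₀ hb]; linarith)
  have hm0R : (0:ℝ) < (m:ℝ) := by exact_mod_cast hm1
  have hmle : (m:ℝ) ≤ Real.log X / b := Nat.floor_le (by positivity)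
  have hmb : (m:ℝ) * b ≤ Real.log X := (le_div_iff₀ hb).mp hmle
  set γ : ℝ := X ^ (-(1/(m:ℝ))) with hγdef
  have hγ0 : 0 < γ := Real.rpow_pos_of_pos hX0 _
  have hlogγ : Real.log γ = -(1/(m:ℝ)) * Real.log X := Real.log_rpow hX0 _
  have hγθ : γ ≤ θ := by
    have h1 : Real.log γ ≤ Real.log θ := by
      rw [hlogγ]
      have : b ≤ Real.log X / m := (le_div_iff₀ hm0R).mpr (by linarith)
      have h2 : -(1/(m:ℝ)) * Real.log X = -(Real.log X / m) := by ring
      rw [h2, hbdef] at *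
      linarith
    have := Real.exp_le_exp.mpr h1
    rwa [Real.exp_log hγ0, Real.exp_log hθ0] at this
  have hγθ2 : θ^2 < γ := by
    have h1 : Real.log (θ^2) < Real.log γ := by
      rw [hlogγ, Real.log_pow]
      have h2 : Real.log X / b < (m:ℝ) + 1 := Nat.lt_floor_add_one _
      have h3 : Real.log X < 2 * m * b := by
        have hm1R : (1:ℝ) ≤ (m:ℝ) := by exact_mod_cast hm1
        have : (m:ℝ) + 1 ≤ 2 * m := by linarith
        have h4 : Real.log X < ((m:ℝ)+1) * b := by
          rw [div_lt_iff₀ hb] at h2; linarith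
        nlinarith [hb]
      have h5 : -(1/(m:ℝ)) * Real.log X = -(Real.log X / m) := by ring
      rw [h5]
      rw [hbdef] at h3
      have h6 : Real.log X / m < 2 * (-Real.log θ) := by
        rw [div_lt_iff₀ hm0R]; nlinarith
      push_cast
      linarith
    have := Real.exp_lt_exp.mpr h1
    rwa [Real.exp_log (by positivity), Real.exp_log hγ0] at this
  have h1γ : 1/γ = X ^ (1/(m:ℝ)) := by
    rw [hγdef, Real.rpow_neg hX0.le, one_div, inv_inv]
  -- the chain of scales
  set t : ℕ → ℝ := fun k => R ^ (X ^ ((k:ℝ)/(m:ℝ))) with htdef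
  have ht0k : ∀ k, 0 < t k := fun k => Real.rpow_pos_of_pos hR0 _
  have ht1k : ∀ k, t k < 1 := fun k =>
    Real.rpow_lt_one hR0.le hR1 (Real.rpow_pos_of_pos hX0 _)
  have htstep : ∀ k : ℕ, t (k+1) = (t k) ^ ((1:ℝ)/γ) := by
    intro k
    rw [h1γ, htdef]
    simp only
    rw [← Real.rpow_mul hR0.le, ← Real.rpow_add hX0]
    congr 1
    push_cast
    ring
  have ht00 : t 0 = R := by
    rw [htdef]; simp
  have htm : t m = r := by
    rw [htdef]
    simp only
    have : ((m:ℝ))/(m:ℝ) = 1 := div_self hm0R.ne'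
    rw [this, Real.rpow_one, hXdef, Real.rpow_def_of_pos hR0]
    rw [mul_comm, div_mul_cancel₀ _ (ne_of_lt hlogR), Real.exp_log hr]
  -- induction along the chain
  have hind : ∀ k, k ≤ m → coverN (closedBall x R ∩ E) (t k) ≤
      ENNReal.ofReal ((3*(n+1):ℝ)^n * CU^k * (R / t k) ^ α') := by
    intro k
    induction k with
    | zero =>
      intro _
      rw [ht00]
      have h1 : (R / R) ^ α' = 1 := by
        rw [div_self hR0.ne', Real.one_rpow]
      rw [h1, pow_zero, mul_one, mul_one]
      calc coverN (closedBall x R ∩ E) R ≤ coverN (closedBall x R) R :=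
            coverN_mono inter_subset_left
      _ ≤ ENNReal.ofReal ((3*(n+1):ℝ)^n * (R/R) ^ (n:ℝ)) := euclid_cover x hR0 le_rfl
      _ = ENNReal.ofReal ((3*(n+1):ℝ)^n) := by
            rw [div_self hR0.ne', Real.one_rpow, mul_one]
    | succ k ih =>
      intro hk1
      have ihh := ih (by omega)
      have hstep : ∀ y ∈ E, coverN (closedBall y (t k) ∩ E) (t (k+1)) ≤
          ENNReal.ofReal (CU * (t k / t (k+1)) ^ α') := by
        intro y hy
        have := hunif γ hγθ2 hγθ y hy (t k) (ht0k k) (ht1k k)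
        rw [← htstep k] at this
        exact this
      have := coverN_chain (inter_subset_right : closedBall x R ∩ E ⊆ E)
        (ht0k k).le
        (by positivity)
        (by positivity)
        ihh hstep
      refine this.trans (le_of_eq ?_)
      congr 1
      have e1 : (R / t k) ^ α' * (t k / t (k+1)) ^ α' = (R / t (k+1)) ^ α' := by
        rw [← Real.mul_rpow (by positivity) (by positivity)]
        congr 1
        have := (ht0k k).ne'
        field_simp
      calc (3*(n+1):ℝ)^n * CU^k * (R / t k) ^ α' * (CU * (t k / t (k+1)) ^ α')
          = (3*(n+1):ℝ)^n * CU^(k+1) * ((R / t k) ^ α' * (t k / t (k+1)) ^ α') := by ring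
      _ = (3*(n+1):ℝ)^n * CU^(k+1) * (R / t (k+1)) ^ α' := by rw [e1]
  -- absorb CU^m
  have hRr0 : 0 < R / r := div_pos hR0 hr
  have habs : CU^m ≤ Real.exp (c₁^2/c₂) * (R/r) ^ ε := by
    have hlogRr : Real.log (R/r) = (-Real.log R) * (X - 1) := by
      rw [Real.log_div hR0.ne' hr.ne']
      have hXR : X * Real.log R = Real.log r := by
        rw [hXdef]; exact div_mul_cancel₀ _ (ne_of_lt hlogR)
      linear_combination hXR
    have hlog2 : Real.log 2 ≤ -Real.log R := by
      have h1 : Real.log R ≤ Real.log (1/2) := Real.log_le_log hR0 hR12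
      rw [one_div, Real.log_inv] at h1
      linarith
    have hL : Real.log 2 * (X - 1) ≤ Real.log (R/r) := by
      rw [hlogRr]
      apply mul_le_mul_of_nonneg_right hlog2 (by linarith)
    have h1 : (m:ℝ) * Real.log CU ≤ c₁ * Real.log X := by
      rw [hc₁def]
      have : Real.log CU / b * Real.log X = (Real.log X / b) * Real.log CU := by ring
      rw [this]
      exact mul_le_mul_of_nonneg_right hmle (Real.log_nonneg hCU)
    have h2 : c₁ * Real.log X ≤ c₁^2/c₂ + c₂ * (X - 1) := log_absorb hc₁0 hc₂0 hX1.le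
    have h3 : c₂ * (X-1) ≤ ε * Real.log (R/r) := by
      rw [hc₂def]
      have := mul_le_mul_of_nonneg_left hL hε.le
      nlinarith [this]
    have h4 : (m:ℝ) * Real.log CU ≤ c₁^2/c₂ + ε * Real.log (R/r) := by linarith
    calc CU^m = Real.exp ((m:ℝ) * Real.log CU) := by
          rw [Real.exp_nat_mul, Real.exp_log (by linarith)]
    _ ≤ Real.exp (c₁^2/c₂ + ε * Real.log (R/r)) := Real.exp_le_exp.mpr h4
    _ = Real.exp (c₁^2/c₂) * (R/r) ^ ε := by
          rw [Real.exp_add]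
          congr 1
          rw [Real.rpow_def_of_pos hRr0, mul_comm]
  -- conclusion
  have hfin := hind m le_rfl
  rw [htm] at hfin
  refine hfin.trans (ENNReal.ofReal_le_ofReal ?_)
  have hrp : (0:ℝ) ≤ (R/r) ^ α' := Real.rpow_nonneg hRr0.le _
  calc (3*(n+1):ℝ)^n * CU^m * (R/r) ^ α'
      ≤ (3*(n+1):ℝ)^n * (Real.exp (c₁^2/c₂) * (R/r) ^ ε) * (R/r) ^ α' := by
        apply mul_le_mul_of_nonneg_right _ hrp
        apply mul_le_mul_of_nonneg_left habs (by positivity)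
  _ = (3*(n+1):ℝ)^n * Real.exp (c₁^2/c₂) * (R/r) ^ (α' + ε) := by
        rw [Real.rpow_add hRr0]
        ring

end MainSmall


set_option maxHeartbeats 4000000 in
/-- the regularized Assouad spectrum is the running supremum of the
(unregularized) Assouad spectrum. -/
theorem stmt14 {n : ℕ} (E : Set (EuclideanSpace ℝ (Fin n))) (θ : ℝ)
    (hθ0 : 0 < θ) (hθ1 : θ < 1) :
    dimAreg θ E = sSup {d : ℝ | ∃ θ' : ℝ, 0 < θ' ∧ θ' < θ ∧ d = dimAspec θ' E} := by
  classical
  set D : Set ℝ := {d : ℝ | ∃ θ' : ℝ, 0 < θ' ∧ θ' < θ ∧ d = dimAspec θ' E} with hD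
  have hne_reg : ((n:ℝ)+1) ∈ SReg θ E := SReg_nonempty E hθ0 hθ1
  have hreg_ne : (SReg θ E).Nonempty := ⟨_, hne_reg⟩
  have hspec_le : ∀ θ', 0 < θ' → θ' < θ → dimAspec θ' E ≤ dimAreg θ E := by
    intro θ' h0 h1
    rw [dimAspec_eq, dimAreg_eq]
    exact csInf_le_csInf (SSpec_bddBelow θ' E) hreg_ne (SReg_subset_SSpec h0 h1 hθ1)
  have hDne : D.Nonempty := ⟨dimAspec (θ/2) E, θ/2, by linarith, by linarith, rfl⟩
  have hDbdd : BddAbove D := ⟨dimAreg θ E, by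
    rintro d ⟨θ', h0, h1, rfl⟩; exact hspec_le θ' h0 h1⟩
  have hges : sSup D ≤ dimAreg θ E := csSup_le hDne (by
    rintro d ⟨θ', h0, h1, rfl⟩; exact hspec_le θ' h0 h1)
  set s : ℝ := sSup D with hsdef
  have hs_le : ∀ θ', 0 < θ' → θ' < θ → dimAspec θ' E ≤ s := fun θ' h0 h1 =>
    le_csSup hDbdd ⟨θ', h0, h1, rfl⟩
  have hs0 : 0 ≤ s := by
    have h1 : 0 ≤ dimAspec (θ/2) E := by
      rw [dimAspec_eq]
      exact Real.sInf_nonneg (fun a ha => ha.1.le)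
    exact h1.trans (hs_le (θ/2) (by linarith) (by linarith))
  -- hard direction
  have key : ∀ ε : ℝ, 0 < ε → ε ≤ 1 → dimAreg θ E ≤ s + ε := by
    intro ε hε hε1
    have hs3 : 0 < s + 3 := by linarith
    set ε₁ : ℝ := min 1 (ε/(4*(s+3))) with hε₁def
    have hε₁0 : 0 < ε₁ := lt_min one_pos (by positivity)
    have hε₁1 : ε₁ ≤ 1 := min_le_left _ _
    have hε₁2 : ε₁ ≤ ε/(4*(s+3)) := min_le_right _ _
    have hex : ∀ θ' : ℝ, 0 < θ' → θ' < θ → ∃ β Cc : ℝ, 0 < β ∧ β < s + ε₁ ∧ 0 < Cc ∧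
        ∀ y ∈ E, ∀ R : ℝ, 0 < R → R < 1 →
          coverN (closedBall y R ∩ E) (R ^ (1/θ')) ≤
            ENNReal.ofReal (Cc * (R / R ^ (1/θ')) ^ β) := by
      intro θ' h0 h1
      have h2 : dimAspec θ' E ≤ s := hs_le θ' h0 h1
      have h3 : sInf (SSpec θ' E) < s + ε₁ := by
        rw [← dimAspec_eq]; linarith
      have h4 : (SSpec θ' E).Nonempty := ⟨_, SReg_subset_SSpec h0 h1 hθ1 hne_reg⟩
      obtain ⟨β, hβmem, hβlt⟩ := exists_lt_of_csInf_lt h4 h3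
      obtain ⟨hβ0, Cc, hCc, hp⟩ := hβmem
      exact ⟨β, Cc, hβ0, hβlt, hCc, hp⟩
    obtain ⟨CU, hCU1, hunif⟩ := unif E hθ0 hθ1 hε₁0 hs0 hex
    set α' : ℝ := (s+ε₁)*(1+ε₁) with hα'def
    have hα'0 : 0 ≤ α' := mul_nonneg (by linarith) (by linarith)
    have hα'le : α' ≤ s + ε/4 := by
      have h1 : α' = s + ε₁*(s + 1 + ε₁) := by rw [hα'def]; ring
      have h2 : ε₁*(s + 1 + ε₁) ≤ ε₁*(s+3) := by nlinarith
      have h3 : ε₁*(s+3) ≤ ε/4 := by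
        calc ε₁*(s+3) ≤ (ε/(4*(s+3)))*(s+3) := mul_le_mul_of_nonneg_right hε₁2 (by linarith)
        _ = ε/4 := by field_simp
      linarith
    obtain ⟨Cf, hCf0, hmain⟩ := main_small E hθ0 hθ1 (by linarith : (0:ℝ) < ε/4) hCU1 hα'0 hunif
    set αf : ℝ := α' + ε/4 with hαfdef
    have hαf0 : 0 < αf := by
      have : 0 < ε/4 := by linarith
      rw [hαfdef]; linarith
    set CE : ℝ := (3*(n+1):ℝ)^n with hCEdef
    have hCE0 : (0:ℝ) < CE := by rw [hCEdef]; positivity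
    set D₀ : ℝ := (1/2:ℝ)/(1/2:ℝ)^(1/θ) with hD₀def
    have hD₀0 : 0 < D₀ := by
      rw [hD₀def]
      exact div_pos (by norm_num) (Real.rpow_pos_of_pos (by norm_num) _)
    set Cbig : ℝ := Cf + (CE * 2^(n:ℝ)) * (Cf + CE * D₀^(n:ℝ)) with hCbigdef
    have hCbig0 : 0 < Cbig := by
      rw [hCbigdef]
      have h1 : (0:ℝ) < 2^(n:ℝ) := Real.rpow_pos_of_pos (by norm_num) _
      have h2 : (0:ℝ) < D₀^(n:ℝ) := Real.rpow_pos_of_pos hD₀0 _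
      positivity
    have hmem : αf ∈ SReg θ E := by
      refine ⟨hαf0, Cbig, hCbig0, fun x hx r R hr hrθ hRθR hR1 => ?_⟩
      have hR0 : 0 < R := lt_trans (lt_of_lt_of_le hr hrθ) hRθR
      have hrR : r ≤ R := (hrθ.trans_lt hRθR).le
      have hRr1 : (1:ℝ) ≤ R/r := (one_le_div hr).mpr hrR
      have hrp1 : (1:ℝ) ≤ (R/r)^αf := by
        calc (1:ℝ) = (1:ℝ)^αf := (Real.one_rpow _).symm
        _ ≤ (R/r)^αf := Real.rpow_le_rpow zero_le_one hRr1 hαf0.le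
      have hrp0 : (0:ℝ) ≤ (R/r)^αf := by linarith
      by_cases hhalf : R ≤ 1/2
      · refine (hmain x hx r R hr hrθ hR0 hhalf).trans (ENNReal.ofReal_le_ofReal ?_)
        have h1 : (CE * 2^(n:ℝ)) * (Cf + CE * D₀^(n:ℝ)) * (R/r)^αf ≥ 0 := by
          have h2 : (0:ℝ) ≤ 2^(n:ℝ) := (Real.rpow_pos_of_pos (by norm_num) _).le
          have h3 : (0:ℝ) ≤ D₀^(n:ℝ) := (Real.rpow_pos_of_pos hD₀0 _).le
          positivity
        rw [hCbigdef]
        nlinarith [hrp0, hCf0]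
      · push_neg at hhalf
        have houter : coverN (closedBall x R ∩ E) (1/2 : ℝ) ≤
            ENNReal.ofReal (CE * 2^(n:ℝ)) := by
          calc coverN (closedBall x R ∩ E) (1/2:ℝ) ≤ coverN (closedBall x R) (1/2:ℝ) :=
                coverN_mono inter_subset_left
          _ ≤ ENNReal.ofReal (CE * (R/(1/2:ℝ))^(n:ℝ)) := euclid_cover x (by norm_num) hhalf.le
          _ ≤ ENNReal.ofReal (CE * 2^(n:ℝ)) := by
                apply ENNReal.ofReal_le_ofReal
                apply mul_le_mul_of_nonneg_left _ hCE0.le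
                apply Real.rpow_le_rpow (by positivity) (by linarith) (by positivity)
        have hinner : ∀ y ∈ E, coverN (closedBall y (1/2:ℝ) ∩ E) r ≤
            ENNReal.ofReal ((Cf + CE * D₀^(n:ℝ)) * (R/r)^αf) := by
          intro y hy
          by_cases hcase : r ≤ (1/2:ℝ)^(1/θ)
          · refine (hmain y hy r (1/2) hr hcase (by norm_num) le_rfl).trans
              (ENNReal.ofReal_le_ofReal ?_)
            have h1 : ((1/2:ℝ)/r) ≤ R/r := (div_le_div_iff_of_pos_right hr).mpr hhalf.le
            have h2 : ((1/2:ℝ)/r)^αf ≤ (R/r)^αf :=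
              Real.rpow_le_rpow (by positivity) h1 hαf0.le
            have h3 : (0:ℝ) ≤ CE * D₀^(n:ℝ) :=
              (mul_pos hCE0 (Real.rpow_pos_of_pos hD₀0 _)).le
            nlinarith [hrp0, hCf0, h2, h3]
          · push_neg at hcase
            set r' : ℝ := min r (1/2) with hr'def
            have hr'0 : 0 < r' := lt_min hr (by norm_num)
            have hr'le : r' ≤ (1/2:ℝ) := min_le_right _ _
            have hhalfθ : (1/2:ℝ)^(1/θ) ≤ (1/2:ℝ) := by
              calc (1/2:ℝ)^(1/θ) ≤ (1/2:ℝ)^(1:ℝ) :=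
                    (Real.rpow_le_rpow_of_exponent_ge (by norm_num) (by norm_num)
                      (le_of_lt (one_lt_one_div hθ0 hθ1)))
              _ = 1/2 := Real.rpow_one _
            have hr'lo : (1/2:ℝ)^(1/θ) ≤ r' := le_min hcase.le hhalfθ
            calc coverN (closedBall y (1/2:ℝ) ∩ E) r
                ≤ coverN (closedBall y (1/2:ℝ) ∩ E) r' := coverN_anti (min_le_left _ _)
            _ ≤ coverN (closedBall y (1/2:ℝ)) r' := coverN_mono inter_subset_left
            _ ≤ ENNReal.ofReal (CE * ((1/2:ℝ)/r')^(n:ℝ)) := euclid_cover y hr'0 hr'le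
            _ ≤ ENNReal.ofReal ((Cf + CE * D₀^(n:ℝ)) * (R/r)^αf) := by
                  apply ENNReal.ofReal_le_ofReal
                  have h1 : ((1/2:ℝ)/r') ≤ D₀ := by
                    rw [hD₀def]
                    exact div_le_div_of_nonneg_left (by norm_num)
                      (Real.rpow_pos_of_pos (by norm_num) _) hr'lo
                  have h2 : ((1/2:ℝ)/r')^(n:ℝ) ≤ D₀^(n:ℝ) :=
                    Real.rpow_le_rpow (by positivity) h1 (by positivity)
                  have h3 : CE * ((1/2:ℝ)/r')^(n:ℝ) ≤ CE * D₀^(n:ℝ) :=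
                    mul_le_mul_of_nonneg_left h2 hCE0.le
                  have h5 : (0:ℝ) < Cf + CE * D₀^(n:ℝ) := by
                    have := mul_pos hCE0 (Real.rpow_pos_of_pos hD₀0 (n:ℝ))
                    linarith
                  have h4 : (Cf + CE * D₀^(n:ℝ)) * 1 ≤ (Cf + CE * D₀^(n:ℝ)) * (R/r)^αf :=
                    mul_le_mul_of_nonneg_left hrp1 h5.le
                  nlinarith [h3, h4, hCf0]
        have := coverN_chain (inter_subset_right : closedBall x R ∩ E ⊆ E)
          (by norm_num : (0:ℝ) ≤ 1/2)
          (by positivity)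
          (by
            have h2 : (0:ℝ) ≤ D₀^(n:ℝ) := (Real.rpow_pos_of_pos hD₀0 _).le
            positivity)
          houter hinner
        refine this.trans (ENNReal.ofReal_le_ofReal ?_)
        rw [hCbigdef]
        nlinarith [hrp0, hCf0, mul_pos hCE0 (Real.rpow_pos_of_pos (by norm_num : (0:ℝ)<2) (n:ℝ)),
          mul_pos hCE0 (Real.rpow_pos_of_pos hD₀0 (n:ℝ))]
    have hle : dimAreg θ E ≤ αf := by
      rw [dimAreg_eq]
      exact csInf_le (SReg_bddBelow θ E) hmem
    calc dimAreg θ E ≤ αf := hle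
    _ = α' + ε/4 := hαfdef
    _ ≤ s + ε/4 + ε/4 := by linarith
    _ ≤ s + ε := by linarith
  have hard : dimAreg θ E ≤ s := by
    have h1 : ∀ ε : ℝ, 0 < ε → dimAreg θ E ≤ s + ε := by
      intro ε hε
      calc dimAreg θ E ≤ s + min ε 1 := key _ (lt_min hε one_pos) (min_le_right _ _)
      _ ≤ s + ε := by linarith [min_le_left ε (1:ℝ)]
    exact le_of_forall_pos_le_add h1
  exact le_antisymm hard hges
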